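/- Let a1 < a2 < a3 and let H, H2 be the Neumann Hamiltonian and second integral on R^4 as above. With the second bracket {F,G}' = ω(N X_F, X_G) defined via the complete lift N of the Neumann tensor L, one has {H, H2}' = 0. -/

import Mathlib

/-- Phase space `ℝ⁴` with coordinates `(X, Y, p_X, p_Y)`. -/
abbrev Phase : Type := ℝ × ℝ × ℝ × ℝ

/-- Partial derivative of `F` in the constant direction `v`. -/
noncomputable def pd (F : Phase → ℝ) (v : Phase) (q : Phase) : ℝ := fderiv ℝ F q v

/-- The canonical symplectic form `ω = dX∧dp_X + dY∧dp_Y` on constant vectors. -/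
def omega (u v : Phase) : ℝ :=
  u.1 * v.2.2.1 - u.2.2.1 * v.1 + u.2.1 * v.2.2.2 - u.2.2.2 * v.2.1

/-- The Hamiltonian vector field of `F` with respect to `ω`. -/
noncomputable def hamVF (F : Phase → ℝ) (q : Phase) : Phase :=
  (pd F (0,0,1,0) q, pd F (0,0,0,1) q, -pd F (1,0,0,0) q, -pd F (0,1,0,0) q)

lemma pd_eq {F : Phase → ℝ} {f' : Phase →L[ℝ] ℝ} {q : Phase}
    (h : HasFDerivAt F f' q) (v : Phase) : pd F v q = f' v := by
  rw [pd, h.fderiv]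

lemma dX (q : Phase) : HasFDerivAt (fun p : Phase => p.1)
    (ContinuousLinearMap.fst ℝ ℝ (ℝ×ℝ×ℝ)) q := hasFDerivAt_fst

lemma dY (q : Phase) : HasFDerivAt (fun p : Phase => p.2.1)
    ((ContinuousLinearMap.fst ℝ ℝ (ℝ×ℝ)).comp (ContinuousLinearMap.snd ℝ ℝ (ℝ×ℝ×ℝ))) q := by
  have h1 : HasFDerivAt (Prod.snd : Phase → ℝ×ℝ×ℝ) (ContinuousLinearMap.snd ℝ ℝ (ℝ×ℝ×ℝ)) q :=
    hasFDerivAt_snd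
  have h2 : HasFDerivAt (Prod.fst : ℝ×ℝ×ℝ → ℝ) (ContinuousLinearMap.fst ℝ ℝ (ℝ×ℝ)) q.2 :=
    hasFDerivAt_fst
  exact h2.comp q h1

lemma dPX (q : Phase) : HasFDerivAt (fun p : Phase => p.2.2.1)
    ((ContinuousLinearMap.fst ℝ ℝ ℝ).comp
      ((ContinuousLinearMap.snd ℝ ℝ (ℝ×ℝ)).comp (ContinuousLinearMap.snd ℝ ℝ (ℝ×ℝ×ℝ)))) q := by
  have h1 : HasFDerivAt (Prod.snd : Phase → ℝ×ℝ×ℝ) (ContinuousLinearMap.snd ℝ ℝ (ℝ×ℝ×ℝ)) q :=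
    hasFDerivAt_snd
  have h2 : HasFDerivAt (Prod.snd : ℝ×ℝ×ℝ → ℝ×ℝ) (ContinuousLinearMap.snd ℝ ℝ (ℝ×ℝ)) q.2 :=
    hasFDerivAt_snd
  have h3 : HasFDerivAt (Prod.fst : ℝ×ℝ → ℝ) (ContinuousLinearMap.fst ℝ ℝ ℝ) q.2.2 :=
    hasFDerivAt_fst
  exact h3.comp q (h2.comp q h1)

lemma dPY (q : Phase) : HasFDerivAt (fun p : Phase => p.2.2.2)
    ((ContinuousLinearMap.snd ℝ ℝ ℝ).comp
      ((ContinuousLinearMap.snd ℝ ℝ (ℝ×ℝ)).comp (ContinuousLinearMap.snd ℝ ℝ (ℝ×ℝ×ℝ)))) q := by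
  have h1 : HasFDerivAt (Prod.snd : Phase → ℝ×ℝ×ℝ) (ContinuousLinearMap.snd ℝ ℝ (ℝ×ℝ×ℝ)) q :=
    hasFDerivAt_snd
  have h2 : HasFDerivAt (Prod.snd : ℝ×ℝ×ℝ → ℝ×ℝ) (ContinuousLinearMap.snd ℝ ℝ (ℝ×ℝ)) q.2 :=
    hasFDerivAt_snd
  have h3 : HasFDerivAt (Prod.snd : ℝ×ℝ → ℝ) (ContinuousLinearMap.snd ℝ ℝ ℝ) q.2.2 :=
    hasFDerivAt_snd
  exact h3.comp q (h2.comp q h1)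

/-- The Neumann Hamiltonian `H` and its second integral `H₂` are in involution also
with respect to the second bracket `{F,G}' = ω(N X_F, X_G)` defined via the complete
lift `N` of the conformal Killing tensor: `{H,H₂}' = 0`. -/
theorem neumann_second_bracket_involution
    (a1 a2 a3 : ℝ) (h12 : a1 < a2) (h23 : a2 < a3)
    (A B C D kappa : Phase → ℝ)
    (hA : ∀ q : Phase, A q = (a3 - a1) * q.1 + a1)
    (hB : ∀ q : Phase, B q = (a3 - a2) * q.1)
    (hC : ∀ q : Phase, C q = (a3 - a1) * q.2.1)
    (hD : ∀ q : Phase, D q = (a3 - a2) * q.2.1 + a2)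
    (hkappa : ∀ q : Phase, kappa q =
      q.2.2.1 * (pd B (1,0,0,0) q - pd A (0,1,0,0) q)
        + q.2.2.2 * (pd D (1,0,0,0) q - pd C (0,1,0,0) q))
    (Nmap : Phase → Phase → Phase)
    (hN : ∀ q v : Phase, Nmap q v =
      (A q * v.1 + B q * v.2.1,
       C q * v.1 + D q * v.2.1,
       -kappa q * v.2.1 + A q * v.2.2.1 + C q * v.2.2.2,
       kappa q * v.1 + B q * v.2.2.1 + D q * v.2.2.2))
    (bk' : (Phase → ℝ) → (Phase → ℝ) → (Phase → ℝ))
    (hbk' : ∀ (F G : Phase → ℝ) (q : Phase),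
      bk' F G q = omega (Nmap q (hamVF F q)) (hamVF G q))
    (H H2 : Phase → ℝ)
    (hH : ∀ q : Phase, H q =
      2 * (q.1 * (1 - q.1) * q.2.2.1 ^ 2 - 2 * q.1 * q.2.1 * q.2.2.1 * q.2.2.2
        + q.2.1 * (1 - q.2.1) * q.2.2.2 ^ 2)
      + (1 / 2) * (a1 - a3) * q.1 + (1 / 2) * (a2 - a3) * q.2.1)
    (hH2 : ∀ q : Phase, H2 q =
      2 * (a1 * q.2.2.2 ^ 2 * q.2.1 + a2 * q.2.2.1 ^ 2 * q.1) * (q.1 + q.2.1 - 1)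
      - 2 * a3 * q.1 * q.2.1 * (q.2.2.2 - q.2.2.1) ^ 2
      - (1 / 2) * a2 * (a1 - a3) * q.1 - (1 / 2) * a1 * (a2 - a3) * q.2.1) :
    ∀ q : Phase, bk' H H2 q = 0 := by
  have hH' : H = fun p : Phase =>
      2 * (p.1 * (1 - p.1) * (p.2.2.1 * p.2.2.1) - 2 * (p.1 * p.2.1 * p.2.2.1 * p.2.2.2)
        + p.2.1 * (1 - p.2.1) * (p.2.2.2 * p.2.2.2))
      + (1 / 2) * (a1 - a3) * p.1 + (1 / 2) * (a2 - a3) * p.2.1 := by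
    funext p; rw [hH p]; ring
  have hH2' : H2 = fun p : Phase =>
      2 * ((a1 * (p.2.2.2 * p.2.2.2) * p.2.1 + a2 * (p.2.2.1 * p.2.2.1) * p.1)
        * (p.1 + p.2.1 - 1))
      - 2 * (a3 * (p.1 * p.2.1 * ((p.2.2.2 - p.2.2.1) * (p.2.2.2 - p.2.2.1))))
      - (1 / 2) * a2 * (a1 - a3) * p.1 - (1 / 2) * a1 * (a2 - a3) * p.2.1 := by
    funext p; rw [hH2 p]; ring
  have hA' : A = fun p : Phase => (a3 - a1) * p.1 + a1 := funext hA
  have hB' : B = fun p : Phase => (a3 - a2) * p.1 := funext hB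
  have hC' : C = fun p : Phase => (a3 - a1) * p.2.1 := funext hC
  have hD' : D = fun p : Phase => (a3 - a2) * p.2.1 + a2 := funext hD
  subst hH' hH2' hA' hB' hC' hD'
  intro q
  have dA : HasFDerivAt (fun p : Phase => (a3 - a1) * p.1 + a1) _ q :=
    ((dX q).const_mul (a3 - a1)).add (hasFDerivAt_const a1 q)
  have dB : HasFDerivAt (fun p : Phase => (a3 - a2) * p.1) _ q :=
    (dX q).const_mul (a3 - a2)
  have dC : HasFDerivAt (fun p : Phase => (a3 - a1) * p.2.1) _ q :=
    (dY q).const_mul (a3 - a1)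
  have dD : HasFDerivAt (fun p : Phase => (a3 - a2) * p.2.1 + a2) _ q :=
    ((dY q).const_mul (a3 - a2)).add (hasFDerivAt_const a2 q)
  have dH : HasFDerivAt (fun p : Phase =>
      2 * (p.1 * (1 - p.1) * (p.2.2.1 * p.2.2.1) - 2 * (p.1 * p.2.1 * p.2.2.1 * p.2.2.2)
        + p.2.1 * (1 - p.2.1) * (p.2.2.2 * p.2.2.2))
      + (1 / 2) * (a1 - a3) * p.1 + (1 / 2) * (a2 - a3) * p.2.1) _ q :=
    (((((((dX q).mul ((hasFDerivAt_const (1:ℝ) q).sub (dX q))).mul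
        ((dPX q).mul (dPX q))).sub
      (((((dX q).mul (dY q)).mul (dPX q)).mul (dPY q)).const_mul 2)).add
      (((dY q).mul ((hasFDerivAt_const (1:ℝ) q).sub (dY q))).mul
        ((dPY q).mul (dPY q)))).const_mul 2).add
      ((dX q).const_mul ((1/2) * (a1 - a3)))).add
      ((dY q).const_mul ((1/2) * (a2 - a3)))
  have dH2 : HasFDerivAt (fun p : Phase =>
      2 * ((a1 * (p.2.2.2 * p.2.2.2) * p.2.1 + a2 * (p.2.2.1 * p.2.2.1) * p.1)
        * (p.1 + p.2.1 - 1))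
      - 2 * (a3 * (p.1 * p.2.1 * ((p.2.2.2 - p.2.2.1) * (p.2.2.2 - p.2.2.1))))
      - (1 / 2) * a2 * (a1 - a3) * p.1 - (1 / 2) * a1 * (a2 - a3) * p.2.1) _ q :=
    (((((((((dPY q).mul (dPY q)).const_mul a1).mul (dY q)).add
        ((((dPX q).mul (dPX q)).const_mul a2).mul (dX q))).mul
        (((dX q).add (dY q)).sub (hasFDerivAt_const (1:ℝ) q))).const_mul 2).sub
      (((((dX q).mul (dY q)).mul
        (((dPY q).sub (dPX q)).mul ((dPY q).sub (dPX q)))).const_mul a3).const_mul 2)).sub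
      ((dX q).const_mul ((1/2) * a2 * (a1 - a3)))).sub
      ((dY q).const_mul ((1/2) * a1 * (a2 - a3)))
  simp only [hbk', hamVF, hN, hkappa, omega,
    pd_eq dH, pd_eq dH2, pd_eq dA, pd_eq dB, pd_eq dC, pd_eq dD,
    ContinuousLinearMap.add_apply, ContinuousLinearMap.sub_apply,
    ContinuousLinearMap.smul_apply, ContinuousLinearMap.comp_apply,
    ContinuousLinearMap.coe_fst', ContinuousLinearMap.coe_snd',
    ContinuousLinearMap.zero_apply, smul_eq_mul, Pi.mul_apply, Pi.add_apply, Pi.sub_apply]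
  ring
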